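/- Let G be a group whose commutator subgroup G' is a 2-group (every element of G' has order a power of 2). Then every element x ∈ G with x² = 1 is a left Engel element: for each g ∈ G there exists n with [g,_n x] = 1. -/

import Mathlib

/-- The commutator `[a,b] = a⁻¹ b⁻¹ a b`. -/
def cmt {G : Type*} [Group G] (a b : G) : G := a⁻¹ * b⁻¹ * a * b

/-- Left-normed Engel commutator: `engel x y 0 = x`, `engel x y (n+1) = [engel x y n, y]`. -/
def engel {G : Type*} [Group G] (x y : G) : ℕ → G
  | 0 => x
  | n + 1 => cmt (engel x y n) y

theorem stmt5 {G : Type*} [Group G]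
    (h2 : ∀ y ∈ commutator G, ∃ k : ℕ, y ^ (2 ^ k) = 1)
    (x : G) (hx : x ^ 2 = 1) :
    ∀ g : G, ∃ n : ℕ, 1 ≤ n ∧ engel g x n = 1 := by
  intro g
  have hxx : x * x = 1 := by rw [← pow_two]; exact hx
  have hxi : x⁻¹ = x := inv_eq_of_mul_eq_one_left hxx
  have hconj : x⁻¹ * cmt g x * x = (cmt g x)⁻¹ := by
    simp [cmt, mul_inv_rev, hxi, mul_assoc, hxx]
  have hmem : cmt g x ∈ commutator G := by
    have heq : cmt g x = (open scoped commutatorElement in ⁅g⁻¹, x⁻¹⁆) := by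
      simp [cmt, commutatorElement_def]
    rw [heq, commutator_def]
    exact Subgroup.commutator_mem_commutator (Subgroup.mem_top _) (Subgroup.mem_top _)
  have key : ∀ n : ℕ, engel g x (n + 1) = cmt g x ^ ((-2 : ℤ) ^ n) := by
    intro n
    induction n with
    | zero => simp [engel]
    | succ n ih =>
      show cmt (engel g x (n + 1)) x = _
      rw [ih]
      have h1 : x⁻¹ * cmt g x ^ ((-2:ℤ)^n) * x = ((cmt g x)⁻¹) ^ ((-2:ℤ)^n) := by
        have h0 := conj_zpow (i := (-2:ℤ)^n) (a := x⁻¹) (b := cmt g x)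
        rw [inv_inv] at h0
        rw [← h0, hconj]
      have : cmt (cmt g x ^ ((-2:ℤ)^n)) x = (cmt g x ^ ((-2:ℤ)^n))⁻¹ * (x⁻¹ * cmt g x ^ ((-2:ℤ)^n) * x) := by
        simp [cmt, mul_assoc]
      rw [this, h1]
      rw [← zpow_neg, inv_zpow, ← zpow_neg, ← zpow_add]
      congr 1
      ring
  obtain ⟨k, hk⟩ := h2 (cmt g x) hmem
  refine ⟨k + 1, by omega, ?_⟩
  rw [key k]
  rw [neg_pow, mul_comm, zpow_mul]
  have h4 : cmt g x ^ ((2:ℤ)^k) = 1 := by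
    rw [show ((2:ℤ)^k) = ((2^k : ℕ) : ℤ) by push_cast; ring, zpow_natCast, hk]
  rw [h4, one_zpow]
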